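/- arXiv:1911.01855 — 2 statements merged into one kernel-verified Lean document; each statement's English description precedes it below -/
import Mathlib

section
/- Let P be a probability distribution on ℝ^s with mean zero, covariance equal to the identity matrix I, and support contained in the closed ball of radius B. Let R be a symmetric s×s real matrix, 0 < d < n, σ = √(d(n−d)/n), ν(x,x̃) = 1 + ((n−2d)/(nσ))·xᵀRx̃ − (1/n)(xᵀRx̃)², and Σ̃(x) = E_{X₀∼P}[ν(x,X₀)·X₀X₀ᵀ]. Then for every x with ‖x‖ ≤ B, ‖Σ̃(x) − I‖ ≤ B²·(B²‖R‖/σ + B⁴‖R‖²/n), where ‖·‖ denotes the operator norm. In particular Σ̃(x) = I + O(σ⁻¹ + n⁻¹) uniformly over x in the support of P. -/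
open Matrix MeasureTheory
open scoped RealInnerProductSpace

/-- The ℓ²→ℓ² operator norm of a square real matrix. -/
noncomputable def matOpNorm {s : ℕ} (M : Matrix (Fin s) (Fin s) ℝ) : ℝ :=
  ‖Matrix.toEuclideanCLM (𝕜 := ℝ) M‖

/-- if `P` has mean zero, identity covariance and support in the ball
of radius `B`, then `‖Σ̃(x) − I‖ ≤ B²(B²‖R‖/σ + B⁴‖R‖²/n)` for all `‖x‖ ≤ B`. -/
theorem sigma_tilde_close_to_identity
    (s : ℕ) (n d : ℝ) (hn : 1 ≤ n) (hd : 0 < d) (hdn : d < n)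
    (R : Matrix (Fin s) (Fin s) ℝ) (hR : R.IsSymm)
    (σ : ℝ) (hσ : σ = Real.sqrt (d * (n - d) / n))
    (B : ℝ) (hB : 0 < B)
    (P : Measure (EuclideanSpace ℝ (Fin s))) [IsProbabilityMeasure P]
    (hmean : ∀ k, ∫ x0, x0 k ∂P = 0)
    (hcov : ∀ i j, ∫ x0, x0 i * x0 j ∂P = if i = j then (1 : ℝ) else 0)
    (hsupp : ∀ᵐ x0 ∂P, ‖x0‖ ≤ B)
    (ν : EuclideanSpace ℝ (Fin s) → EuclideanSpace ℝ (Fin s) → ℝ)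
    (hν : ∀ x y, ν x y =
      1 + ((n - 2 * d) / (n * σ)) * ((x : Fin s → ℝ) ⬝ᵥ R.mulVec (y : Fin s → ℝ))
        - (1 / n) * ((x : Fin s → ℝ) ⬝ᵥ R.mulVec (y : Fin s → ℝ)) ^ 2)
    (SigT : EuclideanSpace ℝ (Fin s) → Matrix (Fin s) (Fin s) ℝ)
    (hSigT : ∀ x i j, SigT x i j = ∫ x0, ν x x0 * (x0 i * x0 j) ∂P) :
    ∀ x : EuclideanSpace ℝ (Fin s), ‖x‖ ≤ B →
      matOpNorm (SigT x - 1) ≤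
        B ^ 2 * (B ^ 2 * matOpNorm R / σ + B ^ 4 * matOpNorm R ^ 2 / n) := by
  intro x hx
  have hn0 : (0:ℝ) < n := lt_of_lt_of_le one_pos hn
  have hσ0 : (0:ℝ) < σ := by
    rw [hσ]
    exact Real.sqrt_pos.mpr (div_pos (mul_pos hd (by linarith)) hn0)
  set Rop : ℝ := matOpNorm R with hRop
  have hRop0 : 0 ≤ Rop := norm_nonneg _
  set K : ℝ := B ^ 2 * Rop / σ + B ^ 4 * Rop ^ 2 / n with hK
  have hK0 : 0 ≤ K := by positivity
  -- coordinate bound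
  have hcoord : ∀ (u : EuclideanSpace ℝ (Fin s)) (i : Fin s), |u i| ≤ ‖u‖ := by
    intro u i
    have h1 : (⟪EuclideanSpace.single i (1:ℝ), u⟫) = u i := by
      simp [EuclideanSpace.inner_single_left]
    calc |u i| = |⟪EuclideanSpace.single i (1:ℝ), u⟫| := by rw [h1]
      _ ≤ ‖EuclideanSpace.single i (1:ℝ)‖ * ‖u‖ := abs_real_inner_le_norm _ _
      _ = ‖u‖ := by rw [EuclideanSpace.norm_single]; simp
  -- Cauchy-Schwarz for dot products
  have hdot : ∀ (u w : EuclideanSpace ℝ (Fin s)),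
      |(u : Fin s → ℝ) ⬝ᵥ (w : Fin s → ℝ)| ≤ ‖u‖ * ‖w‖ := by
    intro u w
    have h1 : (u : Fin s → ℝ) ⬝ᵥ (w : Fin s → ℝ) = ⟪u, w⟫ := by
      simp [dotProduct, PiLp.inner_apply, RCLike.inner_apply, mul_comm]
    rw [h1]
    exact abs_real_inner_le_norm u w
  -- bound on the quadratic form q
  have hq : ∀ x0 : EuclideanSpace ℝ (Fin s),
      |(x : Fin s → ℝ) ⬝ᵥ R.mulVec (x0 : Fin s → ℝ)| ≤ ‖x‖ * (Rop * ‖x0‖) := by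
    intro x0
    set y : EuclideanSpace ℝ (Fin s) := Matrix.toEuclideanCLM (𝕜 := ℝ) R x0 with hy
    have hyv : (y : Fin s → ℝ) = R.mulVec (x0 : Fin s → ℝ) :=
      Matrix.ofLp_toEuclideanCLM R x0
    have hny : ‖y‖ ≤ Rop * ‖x0‖ := (Matrix.toEuclideanCLM (𝕜 := ℝ) R).le_opNorm x0
    calc |(x : Fin s → ℝ) ⬝ᵥ R.mulVec (x0 : Fin s → ℝ)|
        = |(x : Fin s → ℝ) ⬝ᵥ (y : Fin s → ℝ)| := by rw [hyv]
      _ ≤ ‖x‖ * ‖y‖ := hdot x y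
      _ ≤ ‖x‖ * (Rop * ‖x0‖) := by
          exact mul_le_mul_of_nonneg_left hny (norm_nonneg x)
  -- bound on |ν - 1|
  have hνb : ∀ x0 : EuclideanSpace ℝ (Fin s), ‖x0‖ ≤ B → |ν x x0 - 1| ≤ K := by
    intro x0 h0
    rw [hν]
    set q : ℝ := (x : Fin s → ℝ) ⬝ᵥ R.mulVec (x0 : Fin s → ℝ) with hqdef
    have hq1 : |q| ≤ B ^ 2 * Rop := by
      calc |q| ≤ ‖x‖ * (Rop * ‖x0‖) := hq x0
        _ ≤ B * (Rop * B) := by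
            apply mul_le_mul hx (mul_le_mul_of_nonneg_left h0 hRop0)
              (by positivity) hB.le
        _ = B ^ 2 * Rop := by ring
    have hc : |(n - 2 * d) / (n * σ)| ≤ 1 / σ := by
      rw [abs_div, abs_of_pos (mul_pos hn0 hσ0)]
      rw [div_le_div_iff₀ (mul_pos hn0 hσ0) hσ0]
      have : |n - 2 * d| ≤ n := by
        rw [abs_le]; constructor <;> linarith
      calc |n - 2 * d| * σ ≤ n * σ := by
            exact mul_le_mul_of_nonneg_right this hσ0.le
        _ = 1 * (n * σ) := by ring
    have key : |(n - 2 * d) / (n * σ) * q - 1 / n * q ^ 2| ≤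
        |(n - 2 * d) / (n * σ)| * |q| + 1 / n * |q| ^ 2 := by
      calc |(n - 2 * d) / (n * σ) * q - 1 / n * q ^ 2|
          ≤ |(n - 2 * d) / (n * σ) * q| + |1 / n * q ^ 2| := abs_sub _ _
        _ = |(n - 2 * d) / (n * σ)| * |q| + 1 / n * |q| ^ 2 := by
            rw [abs_mul, abs_mul, abs_pow]
            congr 2
            rw [abs_of_pos]; positivity
    have h1 : |(n - 2 * d) / (n * σ)| * |q| ≤ B ^ 2 * Rop / σ := by
      calc |(n - 2 * d) / (n * σ)| * |q| ≤ (1 / σ) * (B ^ 2 * Rop) :=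
            mul_le_mul hc hq1 (abs_nonneg _) (by positivity)
        _ = B ^ 2 * Rop / σ := by ring
    have h2 : 1 / n * |q| ^ 2 ≤ B ^ 4 * Rop ^ 2 / n := by
      have : |q| ^ 2 ≤ (B ^ 2 * Rop) ^ 2 := by
        apply pow_le_pow_left₀ (abs_nonneg _) hq1
      calc 1 / n * |q| ^ 2 ≤ 1 / n * (B ^ 2 * Rop) ^ 2 := by
            exact mul_le_mul_of_nonneg_left this (by positivity)
        _ = B ^ 4 * Rop ^ 2 / n := by ring
    calc |1 + (n - 2 * d) / (n * σ) * q - 1 / n * q ^ 2 - 1|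
        = |(n - 2 * d) / (n * σ) * q - 1 / n * q ^ 2| := by ring_nf
      _ ≤ |(n - 2 * d) / (n * σ)| * |q| + 1 / n * |q| ^ 2 := key
      _ ≤ B ^ 2 * Rop / σ + B ^ 4 * Rop ^ 2 / n := add_le_add h1 h2
  -- integrability helper
  have hInt : ∀ (g : EuclideanSpace ℝ (Fin s) → ℝ) (C0 : ℝ), Continuous g →
      (∀ x0 : EuclideanSpace ℝ (Fin s), ‖x0‖ ≤ B → |g x0| ≤ C0) → Integrable g P := by
    intro g C0 hg hb
    exact (integrable_const C0).mono' hg.aestronglyMeasurable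
      (hsupp.mono fun x0 h => by simpa [Real.norm_eq_abs] using hb x0 h)
  -- continuity facts
  have hcoordc : ∀ i : Fin s, Continuous fun x0 : EuclideanSpace ℝ (Fin s) => x0 i := by
    intro i
    exact (continuous_apply i).comp (PiLp.continuous_ofLp (p := 2) (β := fun _ : Fin s => ℝ))
  have hqc : Continuous fun x0 : EuclideanSpace ℝ (Fin s) =>
      (x : Fin s → ℝ) ⬝ᵥ R.mulVec (x0 : Fin s → ℝ) := by
    have h1 : ∀ x0 : EuclideanSpace ℝ (Fin s),
        (x : Fin s → ℝ) ⬝ᵥ R.mulVec (x0 : Fin s → ℝ)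
          = ∑ i, ∑ j, x i * R i j * x0 j := by
      intro x0
      simp only [dotProduct, Matrix.mulVec, Finset.mul_sum]
      exact Finset.sum_congr rfl fun i _ => Finset.sum_congr rfl fun j _ => by ring
    simp only [h1]
    exact continuous_finset_sum _ fun i _ => continuous_finset_sum _ fun j _ =>
      continuous_const.mul (hcoordc j)
  have hνc : Continuous fun x0 : EuclideanSpace ℝ (Fin s) => ν x x0 := by
    have h1 : ∀ x0 : EuclideanSpace ℝ (Fin s), ν x x0 =
        1 + (n - 2 * d) / (n * σ) * ((x : Fin s → ℝ) ⬝ᵥ R.mulVec (x0 : Fin s → ℝ))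
          - 1 / n * ((x : Fin s → ℝ) ⬝ᵥ R.mulVec (x0 : Fin s → ℝ)) ^ 2 := fun x0 => hν x x0
    simp only [h1]
    exact ((continuous_const.add (continuous_const.mul hqc)).sub
      (continuous_const.mul (hqc.pow 2)))
  -- integrability of the relevant integrands
  have hintcov : ∀ i j : Fin s,
      Integrable (fun x0 : EuclideanSpace ℝ (Fin s) => x0 i * x0 j) P := by
    intro i j
    apply hInt _ (B * B) ((hcoordc i).mul (hcoordc j))
    intro x0 h0
    rw [Pi.mul_apply, abs_mul]
    exact mul_le_mul ((hcoord x0 i).trans h0) ((hcoord x0 j).trans h0)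
      (abs_nonneg _) hB.le
  have hintν : ∀ i j : Fin s,
      Integrable (fun x0 : EuclideanSpace ℝ (Fin s) => ν x x0 * (x0 i * x0 j)) P := by
    intro i j
    apply hInt _ ((K + 1) * (B * B)) (hνc.mul ((hcoordc i).mul (hcoordc j)))
    intro x0 h0
    rw [Pi.mul_apply, Pi.mul_apply, abs_mul, abs_mul]
    have hν1 : |ν x x0| ≤ K + 1 := by
      have := hνb x0 h0
      calc |ν x x0| = |(ν x x0 - 1) + 1| := by ring_nf
        _ ≤ |ν x x0 - 1| + |(1:ℝ)| := abs_add_le _ _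
        _ ≤ K + 1 := by simpa using this
    exact mul_le_mul hν1 (mul_le_mul ((hcoord x0 i).trans h0) ((hcoord x0 j).trans h0)
      (abs_nonneg _) hB.le) (by positivity) (by positivity)
  have hintd : ∀ i j : Fin s,
      Integrable (fun x0 : EuclideanSpace ℝ (Fin s) => (ν x x0 - 1) * (x0 i * x0 j)) P := by
    intro i j
    have := (hintν i j).sub (hintcov i j)
    refine this.congr ?_
    filter_upwards with x0
    simp only [Pi.sub_apply]
    ring
  -- formula for the entries of SigT x - 1
  have hM : ∀ i j : Fin s, (SigT x - 1) i j
      = ∫ x0, (ν x x0 - 1) * (x0 i * x0 j) ∂P := by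
    intro i j
    have h1 : (SigT x - 1) i j = SigT x i j - (if i = j then (1:ℝ) else 0) := by
      simp [Matrix.sub_apply, Matrix.one_apply]
    rw [h1, hSigT, ← hcov i j, ← integral_sub (hintν i j) (hintcov i j)]
    congr 1
    funext x0
    ring
  -- bilinear form identity
  have key : ∀ u v : EuclideanSpace ℝ (Fin s),
      (u : Fin s → ℝ) ⬝ᵥ (SigT x - 1).mulVec (v : Fin s → ℝ)
        = ∫ x0, (ν x x0 - 1) *
            (((u : Fin s → ℝ) ⬝ᵥ (x0 : Fin s → ℝ)) * ((v : Fin s → ℝ) ⬝ᵥ (x0 : Fin s → ℝ))) ∂P := by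
    intro u v
    have step1 : (u : Fin s → ℝ) ⬝ᵥ (SigT x - 1).mulVec (v : Fin s → ℝ)
        = ∑ i, ∑ j, ∫ x0, (u i * v j) * ((ν x x0 - 1) * (x0 i * x0 j)) ∂P := by
      simp only [dotProduct, Matrix.mulVec, hM]
      apply Finset.sum_congr rfl
      intro i _
      rw [show (∑ j, (∫ x0, (ν x x0 - 1) * (x0 i * x0 j) ∂P) * v j) =
        ∑ j, ∫ x0, (v j) * ((ν x x0 - 1) * (x0 i * x0 j)) ∂P from
        Finset.sum_congr rfl fun j _ => by rw [integral_const_mul _ _]; ring,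
        Finset.mul_sum]
      apply Finset.sum_congr rfl
      intro j _
      rw [← integral_const_mul _ _]
      congr 1
      funext x0
      ring
    rw [step1]
    have step2 : ∀ i : Fin s, (∑ j, ∫ x0, (u i * v j) * ((ν x x0 - 1) * (x0 i * x0 j)) ∂P)
        = ∫ x0, ∑ j, (u i * v j) * ((ν x x0 - 1) * (x0 i * x0 j)) ∂P := by
      intro i
      rw [integral_finset_sum]
      intro j _
      exact (hintd i j).const_mul _
    simp only [step2]
    rw [← integral_finset_sum]
    · congr 1
      funext x0
      have hconv : (ν x x0 - 1) * ((∑ i, u i * x0 i) * (∑ j, v j * x0 j)) =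
          ∑ i, ∑ j, (u i * v j) * ((ν x x0 - 1) * (x0 i * x0 j)) := by
        rw [Finset.sum_mul_sum, Finset.mul_sum]
        refine Finset.sum_congr rfl fun i _ => ?_
        rw [Finset.mul_sum]
        exact Finset.sum_congr rfl fun j _ => by ring
      simpa [dotProduct] using hconv.symm
    · intro i _
      exact integrable_finset_sum _ fun j _ => (hintd i j).const_mul _
  -- bound on the bilinear form
  have keybound : ∀ u v : EuclideanSpace ℝ (Fin s),
      (u : Fin s → ℝ) ⬝ᵥ (SigT x - 1).mulVec (v : Fin s → ℝ)
        ≤ B ^ 2 * K * (‖u‖ * ‖v‖) := by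
    intro u v
    rw [key u v]
    have hb : ∀ᵐ x0 ∂P, ‖(ν x x0 - 1) *
        (((u : Fin s → ℝ) ⬝ᵥ (x0 : Fin s → ℝ)) * ((v : Fin s → ℝ) ⬝ᵥ (x0 : Fin s → ℝ)))‖
          ≤ B ^ 2 * K * (‖u‖ * ‖v‖) := by
      filter_upwards [hsupp] with x0 h0
      rw [Real.norm_eq_abs, abs_mul, abs_mul]
      calc |ν x x0 - 1| * (|(u : Fin s → ℝ) ⬝ᵥ (x0 : Fin s → ℝ)| * |(v : Fin s → ℝ) ⬝ᵥ (x0 : Fin s → ℝ)|)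
          ≤ K * ((‖u‖ * B) * (‖v‖ * B)) := by
            apply mul_le_mul (hνb x0 h0)
            · apply mul_le_mul ((hdot u x0).trans (by
                exact mul_le_mul_of_nonneg_left h0 (norm_nonneg u)))
                ((hdot v x0).trans (mul_le_mul_of_nonneg_left h0 (norm_nonneg v)))
                (abs_nonneg _) (by positivity)
            · positivity
            · exact hK0
        _ = B ^ 2 * K * (‖u‖ * ‖v‖) := by ring
    have := norm_integral_le_of_norm_le_const hb
    simp only [probReal_univ, measure_univ, ENNReal.toReal_one, mul_one] at this
    calc (∫ x0, (ν x x0 - 1) *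
        (((u : Fin s → ℝ) ⬝ᵥ (x0 : Fin s → ℝ)) * ((v : Fin s → ℝ) ⬝ᵥ (x0 : Fin s → ℝ))) ∂P)
        ≤ ‖∫ x0, (ν x x0 - 1) *
        (((u : Fin s → ℝ) ⬝ᵥ (x0 : Fin s → ℝ)) * ((v : Fin s → ℝ) ⬝ᵥ (x0 : Fin s → ℝ))) ∂P‖ :=
          le_abs_self _
      _ ≤ B ^ 2 * K * (‖u‖ * ‖v‖) := this
  -- conclude via the operator norm
  show matOpNorm (SigT x - 1) ≤ B ^ 2 * K
  unfold matOpNorm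
  apply ContinuousLinearMap.opNorm_le_bound _ (by positivity)
  intro v
  set w : EuclideanSpace ℝ (Fin s) := Matrix.toEuclideanCLM (𝕜 := ℝ) (SigT x - 1) v with hwdef
  have hw : (w : Fin s → ℝ) = (SigT x - 1).mulVec (v : Fin s → ℝ) :=
    Matrix.ofLp_toEuclideanCLM _ v
  have hw2 : ‖w‖ ^ 2 = (w : Fin s → ℝ) ⬝ᵥ (SigT x - 1).mulVec (v : Fin s → ℝ) := by
    rw [← hw, ← real_inner_self_eq_norm_sq]
    simp only [dotProduct, PiLp.inner_apply, RCLike.inner_apply, conj_trivial]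
  have hb := keybound w v
  rw [← hw2] at hb
  rcases eq_or_lt_of_le (norm_nonneg w) with h0 | h0
  · rw [← h0]
    positivity
  · nlinarith [norm_nonneg v]
end

section
/- (Proposition 1, equation (10), quantitative form.) Let P be a probability distribution on ℝ^s with mean zero, identity covariance, and support in the closed ball of radius B. Let R be a symmetric s×s real matrix with eigenvalues r_1, …, r_s, and let R̄ (resp. R̲) be the symmetric matrix with the same eigenvectors as R and eigenvalues max(|r_i|,1) (resp. min(|r_i|,1)). Let 0 < d < n, σ = √(d(n−d)/n), ν(x,x̃) = 1 + ((n−2d)/(nσ))·xᵀRx̃ − (1/n)(xᵀRx̃)², Σ̃(x) = E_{X₀∼P}[ν(x,X₀)·X₀X₀ᵀ], M = (I − R̄⁻²)^{1/2} (positive semidefinite square root), and Σ(x) = M Σ̃(x) M + R̄⁻¹R̲²R̄⁻¹. Then for every x with ‖x‖ ≤ B, ‖Σ(x) − R̲²‖ ≤ B⁴‖R‖/σ + B⁶‖R‖²/n, where ‖·‖ is the operator norm. In particular Σ(x) = R̲² + O(σ⁻¹ + n⁻¹) uniformly over the support of P. -/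
open Matrix MeasureTheory

lemma dot_eq_inner {s : ℕ} (A : Matrix (Fin s) (Fin s) ℝ) (u v : EuclideanSpace ℝ (Fin s)) :
    (u : Fin s → ℝ) ⬝ᵥ A.mulVec (v : Fin s → ℝ) =
      inner ℝ u ((Matrix.toEuclideanCLM (𝕜 := ℝ) A) v) := by
  simp [PiLp.inner_apply, dotProduct, mul_comm]

lemma matOpNorm_le_of_inner {s : ℕ} (A : Matrix (Fin s) (Fin s) ℝ) (c : ℝ) (hc : 0 ≤ c)
    (h : ∀ u v : EuclideanSpace ℝ (Fin s),
      |(u : Fin s → ℝ) ⬝ᵥ A.mulVec (v : Fin s → ℝ)| ≤ c * ‖u‖ * ‖v‖) :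
    matOpNorm A ≤ c := by
  apply ContinuousLinearMap.opNorm_le_bound _ hc
  intro v
  set w := Matrix.toEuclideanCLM (𝕜 := ℝ) A v with hw
  have h1 : ‖w‖ ^ 2 = inner ℝ w w := (real_inner_self_eq_norm_sq w).symm
  have h2 := h w v
  rw [dot_eq_inner, ← hw] at h2
  have h3 : ‖w‖ ^ 2 ≤ c * ‖w‖ * ‖v‖ := by
    rw [h1]; calc (inner ℝ w w : ℝ) ≤ |inner ℝ w w| := le_abs_self _
    _ ≤ c * ‖w‖ * ‖v‖ := h2
  rcases eq_or_lt_of_le (norm_nonneg w) with h0 | h0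
  · simp [← h0]; positivity
  · nlinarith

lemma sq_sum_transpose {s : ℕ} (U : Matrix (Fin s) (Fin s) ℝ) (hU2 : U * Uᵀ = 1)
    (u : Fin s → ℝ) : (Uᵀ.mulVec u) ⬝ᵥ (Uᵀ.mulVec u) = u ⬝ᵥ u := by
  rw [Matrix.dotProduct_mulVec, Matrix.vecMul_transpose, Matrix.mulVec_mulVec, hU2,
    Matrix.one_mulVec]

lemma norm_eu {s : ℕ} (u : EuclideanSpace ℝ (Fin s)) :
    ‖u‖ ^ 2 = (u : Fin s → ℝ) ⬝ᵥ (u : Fin s → ℝ) := by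
  rw [EuclideanSpace.norm_eq, Real.sq_sqrt (Finset.sum_nonneg fun i _ => sq_nonneg _)]
  simp [dotProduct, Real.norm_eq_abs, sq_abs, pow_two]

lemma matOpNorm_conj_diag_le {s : ℕ} (U : Matrix (Fin s) (Fin s) ℝ)
    (hU2 : U * Uᵀ = 1) (g : Fin s → ℝ) (c : ℝ) (hc : 0 ≤ c) (hg : ∀ i, |g i| ≤ c) :
    matOpNorm (U * Matrix.diagonal g * Uᵀ) ≤ c := by
  apply matOpNorm_le_of_inner _ c hc
  intro u v
  set a := Uᵀ.mulVec (u : Fin s → ℝ) with ha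
  set b := Uᵀ.mulVec (v : Fin s → ℝ) with hb
  have key : (u : Fin s → ℝ) ⬝ᵥ (U * Matrix.diagonal g * Uᵀ).mulVec (v : Fin s → ℝ)
      = ∑ i, g i * (a i * b i) := by
    rw [← Matrix.mulVec_mulVec, ← Matrix.mulVec_mulVec, Matrix.dotProduct_mulVec,
      ← Matrix.mulVec_transpose]
    simp only [dotProduct, Matrix.mulVec_diagonal, ← ha, ← hb]
    apply Finset.sum_congr rfl; intro i _; ring
  rw [key]
  have cs : (∑ i, |a i| * |b i|) ^ 2 ≤ (∑ i, |a i| ^ 2) * (∑ i, |b i| ^ 2) :=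
    Finset.sum_mul_sq_le_sq_mul_sq _ _ _
  have hna : (∑ i, |a i| ^ 2) = ‖u‖ ^ 2 := by
    rw [norm_eu]; rw [← sq_sum_transpose U hU2 u]
    simp [dotProduct, sq_abs, pow_two]
    rfl
  have hnb : (∑ i, |b i| ^ 2) = ‖v‖ ^ 2 := by
    rw [norm_eu]; rw [← sq_sum_transpose U hU2 v]
    simp [dotProduct, sq_abs, pow_two]
    rfl
  have h1 : (0:ℝ) ≤ ∑ i, |a i| * |b i| :=
    Finset.sum_nonneg fun i _ => mul_nonneg (abs_nonneg _) (abs_nonneg _)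
  have cs2 : (∑ i, |a i| * |b i|) ≤ ‖u‖ * ‖v‖ := by
    nlinarith [cs, hna, hnb, h1, mul_nonneg (norm_nonneg u) (norm_nonneg v)]
  calc |∑ i, g i * (a i * b i)| ≤ ∑ i, |g i * (a i * b i)| := Finset.abs_sum_le_sum_abs _ _
  _ ≤ ∑ i, c * (|a i| * |b i|) := by
      apply Finset.sum_le_sum; intro i _
      rw [abs_mul, abs_mul]
      exact mul_le_mul_of_nonneg_right (hg i) (mul_nonneg (abs_nonneg _) (abs_nonneg _))
  _ = c * ∑ i, |a i| * |b i| := by rw [Finset.mul_sum]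
  _ ≤ c * (‖u‖ * ‖v‖) := mul_le_mul_of_nonneg_left cs2 hc
  _ = c * ‖u‖ * ‖v‖ := by ring

lemma coord_le_norm {s : ℕ} (u : EuclideanSpace ℝ (Fin s)) (i : Fin s) : |u i| ≤ ‖u‖ := by
  have h1 : |u i| ^ 2 ≤ ‖u‖ ^ 2 := by
    rw [norm_eu]
    calc |u i| ^ 2 = u i * u i := by rw [sq_abs, pow_two]
    _ ≤ ∑ j, u j * u j := Finset.single_le_sum (f := fun j => u j * u j)
        (fun j _ => mul_self_nonneg _) (Finset.mem_univ i)
    _ = (u : Fin s → ℝ) ⬝ᵥ (u : Fin s → ℝ) := rfl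
  nlinarith [abs_nonneg (u i), norm_nonneg u]

lemma dot_le_norms {s : ℕ} (u v : EuclideanSpace ℝ (Fin s)) :
    |(u : Fin s → ℝ) ⬝ᵥ (v : Fin s → ℝ)| ≤ ‖u‖ * ‖v‖ := by
  have h1 : (u : Fin s → ℝ) ⬝ᵥ (v : Fin s → ℝ) = inner ℝ u v := by
    simp [PiLp.inner_apply, dotProduct, mul_comm]
  rw [h1]
  exact abs_real_inner_le_norm u v


set_option maxHeartbeats 1000000

/-- Proposition 1, equation (10), quantitative form: with
`Σ(x) = (I − R̄⁻²)^{1/2} Σ̃(x) (I − R̄⁻²)^{1/2} + R̄⁻¹R̲²R̄⁻¹`, for every `‖x‖ ≤ B`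
one has `‖Σ(x) − R̲²‖ ≤ B⁴‖R‖/σ + B⁶‖R‖²/n` in operator norm. -/
theorem sigma_close_to_runder_sq
    (s : ℕ) (n d : ℝ) (hn : 1 ≤ n) (hd : 0 < d) (hdn : d < n)
    (σ : ℝ) (hσ : σ = Real.sqrt (d * (n - d) / n))
    (B : ℝ) (hB : 0 < B)
    -- the symmetric matrix `R` and its truncations `R̄`, `R̲`
    (R U Rbar Runder M : Matrix (Fin s) (Fin s) ℝ) (r : Fin s → ℝ)
    (hU : U ∈ Matrix.orthogonalGroup (Fin s) ℝ)
    (hR : R = U * Matrix.diagonal r * Uᵀ)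
    (hRbar : Rbar = U * Matrix.diagonal (fun i => max |r i| 1) * Uᵀ)
    (hRunder : Runder = U * Matrix.diagonal (fun i => min |r i| 1) * Uᵀ)
    -- `M` is the positive semidefinite square root of `I − R̄⁻²`
    (hM : M.PosSemidef)
    (hMsq : M * M = 1 - (Rbar * Rbar)⁻¹)
    -- `P` has mean zero, identity covariance and support in the ball of radius `B`
    (P : Measure (EuclideanSpace ℝ (Fin s))) [IsProbabilityMeasure P]
    (hmean : ∀ k, ∫ x0, x0 k ∂P = 0)
    (hcov : ∀ i j, ∫ x0, x0 i * x0 j ∂P = if i = j then (1 : ℝ) else 0)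
    (hsupp : ∀ᵐ x0 ∂P, ‖x0‖ ≤ B)
    -- the variance function and the two covariance matrices
    (ν : EuclideanSpace ℝ (Fin s) → EuclideanSpace ℝ (Fin s) → ℝ)
    (hν : ∀ x y, ν x y =
      1 + ((n - 2 * d) / (n * σ)) * ((x : Fin s → ℝ) ⬝ᵥ R.mulVec (y : Fin s → ℝ))
        - (1 / n) * ((x : Fin s → ℝ) ⬝ᵥ R.mulVec (y : Fin s → ℝ)) ^ 2)
    (SigT : EuclideanSpace ℝ (Fin s) → Matrix (Fin s) (Fin s) ℝ)
    (hSigT : ∀ x i j, SigT x i j = ∫ x0, ν x x0 * (x0 i * x0 j) ∂P)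
    (Sig : EuclideanSpace ℝ (Fin s) → Matrix (Fin s) (Fin s) ℝ)
    (hSig : ∀ x, Sig x = M * SigT x * M + Rbar⁻¹ * (Runder * Runder) * Rbar⁻¹) :
    ∀ x : EuclideanSpace ℝ (Fin s), ‖x‖ ≤ B →
      matOpNorm (Sig x - Runder * Runder) ≤
        B ^ 4 * matOpNorm R / σ + B ^ 6 * matOpNorm R ^ 2 / n := by
  intro x hx
  have hn0 : (0:ℝ) < n := lt_of_lt_of_le one_pos hn
  have hσpos : 0 < σ := by
    rw [hσ]
    exact Real.sqrt_pos.mpr (div_pos (mul_pos hd (by linarith)) hn0)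
  -- orthogonality
  have hU2 : U * Uᵀ = 1 := by
    have := (Matrix.mem_orthogonalGroup_iff (Fin s) ℝ).mp hU
    simpa [Matrix.star_eq_conjTranspose] using this
  have hU1 : Uᵀ * U = 1 := by
    have := (Matrix.mem_orthogonalGroup_iff' (Fin s) ℝ).mp hU
    simpa [Matrix.star_eq_conjTranspose] using this
  -- conjugation infrastructure
  set C : (Fin s → ℝ) → Matrix (Fin s) (Fin s) ℝ :=
    fun g => U * Matrix.diagonal g * Uᵀ with hC
  have hCmul : ∀ g h : Fin s → ℝ, C g * C h = C (fun i => g i * h i) := by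
    intro g h
    simp only [hC]
    calc U * Matrix.diagonal g * Uᵀ * (U * Matrix.diagonal h * Uᵀ)
        = U * Matrix.diagonal g * (Uᵀ * U) * Matrix.diagonal h * Uᵀ := by
          simp only [Matrix.mul_assoc]
      _ = U * (Matrix.diagonal g * Matrix.diagonal h) * Uᵀ := by
          rw [hU1]; simp only [Matrix.mul_one, Matrix.mul_assoc]
      _ = U * Matrix.diagonal (fun i => g i * h i) * Uᵀ := by
          rw [Matrix.diagonal_mul_diagonal]
  have hCone : C (fun _ => 1) = 1 := by
    simp only [hC]
    rw [show (Matrix.diagonal (fun _ : Fin s => (1:ℝ))) = 1 from Matrix.diagonal_one]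
    rw [Matrix.mul_one, hU2]
  have hCsub : ∀ g h : Fin s → ℝ, C g - C h = C (fun i => g i - h i) := by
    intro g h
    simp only [hC, ← Matrix.diagonal_sub, Matrix.sub_mul, Matrix.mul_sub]
  have hCinv : ∀ g : Fin s → ℝ, (∀ i, g i ≠ 0) → (C g)⁻¹ = C (fun i => (g i)⁻¹) := by
    intro g hg
    apply Matrix.inv_eq_right_inv
    rw [hCmul]
    have : (fun i => g i * (g i)⁻¹) = fun _ : Fin s => (1:ℝ) := by
      funext i; exact mul_inv_cancel₀ (hg i)
    rw [this, hCone]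
  set m : Fin s → ℝ := fun i => max |r i| 1 with hm
  set l : Fin s → ℝ := fun i => min |r i| 1 with hl
  have hm1 : ∀ i, 1 ≤ m i := fun i => le_max_right _ _
  have hmne : ∀ i, m i ≠ 0 := fun i => by have := hm1 i; linarith
  -- step 1 : Sig x - Runder^2 = M * (SigT x - 1) * M
  have hRbarC : Rbar = C m := hRbar
  have hRunderC : Runder = C l := hRunder
  have hinvRbar : Rbar⁻¹ = C (fun i => (m i)⁻¹) := by
    rw [hRbarC]; exact hCinv m hmne
  have hinvRbarSq : (Rbar * Rbar)⁻¹ = C (fun i => (m i * m i)⁻¹) := by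
    rw [hRbarC, hCmul]
    exact hCinv _ (fun i => mul_ne_zero (hmne i) (hmne i))
  have lhs_eq : Rbar⁻¹ * (Runder * Runder) * Rbar⁻¹ - Runder * Runder
      = C (fun i => (m i)⁻¹ * (l i * l i) * (m i)⁻¹ - l i * l i) := by
    rw [hinvRbar, hRunderC, hCmul, hCmul, hCmul, hCsub]
  have rhs_eq : (Rbar * Rbar)⁻¹ - 1 = C (fun i => (m i * m i)⁻¹ - 1) := by
    rw [hinvRbarSq, ← hCone, hCsub]
  have h3 : Rbar⁻¹ * (Runder * Runder) * Rbar⁻¹ - Runder * Runder = (Rbar * Rbar)⁻¹ - 1 := by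
    rw [lhs_eq, rhs_eq]
    apply congrArg C
    funext i
    show (m i)⁻¹ * (l i * l i) * (m i)⁻¹ - l i * l i = (m i * m i)⁻¹ - 1
    rcases le_or_gt (|r i|) 1 with h | h
    · have hmi : m i = 1 := max_eq_right h
      rw [hmi]; simp
    · have hli : l i = 1 := min_eq_right h.le
      have hmi0 : m i ≠ 0 := hmne i
      rw [hli, mul_inv]; ring
  have key1 : Sig x - Runder * Runder = M * (SigT x - 1) * M := by
    rw [hSig]
    have h2 : M * (SigT x - 1) * M = M * SigT x * M - (1 - (Rbar * Rbar)⁻¹) := by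
      rw [← hMsq]; noncomm_ring
    rw [h2]
    calc M * SigT x * M + Rbar⁻¹ * (Runder * Runder) * Rbar⁻¹ - Runder * Runder
        = M * SigT x * M + (Rbar⁻¹ * (Runder * Runder) * Rbar⁻¹ - Runder * Runder) := by abel
      _ = M * SigT x * M + ((Rbar * Rbar)⁻¹ - 1) := by rw [h3]
      _ = M * SigT x * M - (1 - (Rbar * Rbar)⁻¹) := by abel
  -- step 2 : ‖M‖ ≤ 1
  have hMnorm : matOpNorm M ≤ 1 := by
    have hstar : star M = M := by
      rw [Matrix.star_eq_conjTranspose]; exact hM.1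
    have hsq : matOpNorm M * matOpNorm M = matOpNorm (M * M) := by
      unfold matOpNorm
      rw [← CStarRing.norm_star_mul_self (x := Matrix.toEuclideanCLM (𝕜 := ℝ) M)]
      rw [← map_star, hstar, ← _root_.map_mul]
    have hMM : matOpNorm (M * M) ≤ 1 := by
      rw [hMsq, hinvRbarSq, ← hCone, hCsub]
      apply matOpNorm_conj_diag_le U hU2 _ 1 zero_le_one
      intro i
      show |1 - (m i * m i)⁻¹| ≤ 1
      have h1 := hm1 i
      have h2 : 0 < m i * m i := by nlinarith
      have h3 : (m i * m i)⁻¹ ≤ 1 := by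
        rw [inv_le_one_iff₀]; right; nlinarith
      have h4 : 0 < (m i * m i)⁻¹ := inv_pos.mpr h2
      rw [abs_le]; constructor <;> linarith
    nlinarith [hsq, hMM, ContinuousLinearMap.opNorm_nonneg (Matrix.toEuclideanCLM (𝕜 := ℝ) M)]
  -- notation
  set T := Matrix.toEuclideanCLM (𝕜 := ℝ) (n := Fin s) with hT
  set Cb : ℝ := B ^ 4 * matOpNorm R / σ + B ^ 6 * matOpNorm R ^ 2 / n with hCb
  have hRn : 0 ≤ matOpNorm R := ContinuousLinearMap.opNorm_nonneg _
  have hCb0 : 0 ≤ Cb := by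
    rw [hCb]; positivity
  -- bound on the quadratic form
  have hq : ∀ x0 : EuclideanSpace ℝ (Fin s), ‖x0‖ ≤ B →
      |(x : Fin s → ℝ) ⬝ᵥ R.mulVec (x0 : Fin s → ℝ)| ≤ B ^ 2 * matOpNorm R := by
    intro x0 h0
    rw [dot_eq_inner]
    calc |(inner ℝ x (T R x0) : ℝ)| ≤ ‖x‖ * ‖T R x0‖ := abs_real_inner_le_norm _ _
    _ ≤ ‖x‖ * (‖T R‖ * ‖x0‖) :=
        mul_le_mul_of_nonneg_left ((T R).le_opNorm x0) (norm_nonneg x)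
    _ ≤ B * (matOpNorm R * B) := by
        have h1 : ‖T R‖ * ‖x0‖ ≤ matOpNorm R * B :=
          mul_le_mul_of_nonneg_left h0 (ContinuousLinearMap.opNorm_nonneg _)
        have h2 : 0 ≤ ‖T R‖ * ‖x0‖ := by positivity
        exact mul_le_mul hx h1 h2 hB.le
    _ = B ^ 2 * matOpNorm R := by ring
  -- bound on ν - 1
  have hν1 : ∀ x0 : EuclideanSpace ℝ (Fin s), ‖x0‖ ≤ B →
      |ν x x0 - 1| ≤ B ^ 2 * matOpNorm R / σ + B ^ 4 * matOpNorm R ^ 2 / n := by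
    intro x0 h0
    have hqx := hq x0 h0
    set q : ℝ := (x : Fin s → ℝ) ⬝ᵥ R.mulVec (x0 : Fin s → ℝ) with hqdef
    have e1 : ν x x0 - 1 = ((n - 2 * d) / (n * σ)) * q - (1 / n) * q ^ 2 := by
      rw [hν]; ring
    rw [e1]
    have habs : |(n - 2 * d) / (n * σ)| ≤ 1 / σ := by
      rw [abs_div, abs_of_pos (mul_pos hn0 hσpos)]
      rw [div_le_div_iff₀ (mul_pos hn0 hσpos) hσpos]
      have : |n - 2 * d| ≤ n := by
        rw [abs_le]; constructor <;> linarith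
      calc |n - 2 * d| * σ ≤ n * σ := mul_le_mul_of_nonneg_right this hσpos.le
      _ = 1 * (n * σ) := by ring
    calc |((n - 2 * d) / (n * σ)) * q - (1 / n) * q ^ 2|
        ≤ |((n - 2 * d) / (n * σ)) * q| + |(1 / n) * q ^ 2| := abs_sub _ _
    _ = |(n - 2 * d) / (n * σ)| * |q| + (1 / n) * q ^ 2 := by
        rw [abs_mul, abs_mul]
        rw [abs_of_pos (by positivity : (0:ℝ) < 1 / n), abs_of_nonneg (sq_nonneg q)]
    _ ≤ (1 / σ) * (B ^ 2 * matOpNorm R) + (1 / n) * (B ^ 2 * matOpNorm R) ^ 2 := by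
        have h1 : |(n - 2 * d) / (n * σ)| * |q| ≤ (1 / σ) * (B ^ 2 * matOpNorm R) :=
          mul_le_mul habs hqx (abs_nonneg q) (by positivity)
        have h2 : q ^ 2 ≤ (B ^ 2 * matOpNorm R) ^ 2 := by
          rw [← sq_abs q]
          exact pow_le_pow_left₀ (abs_nonneg q) hqx 2
        have h3 : (1 / n) * q ^ 2 ≤ (1 / n) * (B ^ 2 * matOpNorm R) ^ 2 :=
          mul_le_mul_of_nonneg_left h2 (by positivity)
        linarith
    _ = B ^ 2 * matOpNorm R / σ + B ^ 4 * matOpNorm R ^ 2 / n := by ring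
  set K1 : ℝ := B ^ 2 * matOpNorm R / σ + B ^ 4 * matOpNorm R ^ 2 / n with hK1
  have hK10 : 0 ≤ K1 := by rw [hK1]; positivity
  -- continuity facts
  have hcontcoord : ∀ i : Fin s, Continuous fun x0 : EuclideanSpace ℝ (Fin s) => x0 i :=
    fun i => (EuclideanSpace.proj (𝕜 := ℝ) i).continuous
  have hcontq : Continuous fun x0 : EuclideanSpace ℝ (Fin s) =>
      (x : Fin s → ℝ) ⬝ᵥ R.mulVec (x0 : Fin s → ℝ) := by
    have e : (fun x0 : EuclideanSpace ℝ (Fin s) =>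
        (x : Fin s → ℝ) ⬝ᵥ R.mulVec (x0 : Fin s → ℝ))
        = fun x0 => (inner ℝ x (T R x0) : ℝ) := funext fun x0 => dot_eq_inner R x x0
    rw [e]
    exact Continuous.inner continuous_const (T R).continuous
  have hcontν : Continuous fun x0 => ν x x0 := by
    have e : (fun x0 => ν x x0) = fun (x0 : EuclideanSpace ℝ (Fin s)) =>
        1 + ((n - 2 * d) / (n * σ)) * ((x : Fin s → ℝ) ⬝ᵥ R.mulVec (x0 : Fin s → ℝ))
          - (1 / n) * ((x : Fin s → ℝ) ⬝ᵥ R.mulVec (x0 : Fin s → ℝ)) ^ 2 :=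
      funext fun x0 => hν x x0
    rw [e]
    exact ((continuous_const.add (continuous_const.mul hcontq)).sub
      (continuous_const.mul (hcontq.pow 2)))
  -- integrability helper
  have hintb : ∀ (f : EuclideanSpace ℝ (Fin s) → ℝ) (K : ℝ), Continuous f →
      (∀ x0, ‖x0‖ ≤ B → |f x0| ≤ K) → Integrable f P := by
    intro f K hf hK
    apply Integrable.mono' (integrable_const K) hf.aestronglyMeasurable
    filter_upwards [hsupp] with x0 h0
    simpa [Real.norm_eq_abs] using hK x0 h0
  have hcoordb : ∀ (x0 : EuclideanSpace ℝ (Fin s)) (i j : Fin s), ‖x0‖ ≤ B →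
      |x0 i * x0 j| ≤ B * B := by
    intro x0 i j h0
    rw [abs_mul]
    have h1 : |x0 i| ≤ B := le_trans (coord_le_norm x0 i) h0
    have h2 : |x0 j| ≤ B := le_trans (coord_le_norm x0 j) h0
    exact mul_le_mul h1 h2 (abs_nonneg _) hB.le
  have int1 : ∀ i j, Integrable (fun x0 => ν x x0 * (x0 i * x0 j)) P := by
    intro i j
    apply hintb _ ((K1 + 1) * (B * B)) (hcontν.mul ((hcontcoord i).mul (hcontcoord j)))
    intro x0 h0
    simp only [Pi.mul_apply, Pi.sub_apply]
    rw [abs_mul]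
    have h1 : |ν x x0| ≤ K1 + 1 := by
      have := hν1 x0 h0
      calc |ν x x0| = |(ν x x0 - 1) + 1| := by ring_nf
      _ ≤ |ν x x0 - 1| + |(1:ℝ)| := abs_add_le _ _
      _ ≤ K1 + 1 := by rw [abs_one]; linarith
    exact mul_le_mul h1 (hcoordb x0 i j h0) (abs_nonneg _) (by linarith)
  have int2 : ∀ i j, Integrable (fun x0 => x0 i * x0 j) P := by
    intro i j
    apply hintb _ (B * B) ((hcontcoord i).mul (hcontcoord j))
    intro x0 h0
    exact hcoordb x0 i j h0
  have int3 : ∀ i j, Integrable (fun x0 => (ν x x0 - 1) * (x0 i * x0 j)) P := by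
    intro i j
    apply hintb _ (K1 * (B * B))
      ((hcontν.sub continuous_const).mul ((hcontcoord i).mul (hcontcoord j)))
    intro x0 h0
    simp only [Pi.mul_apply, Pi.sub_apply]
    rw [abs_mul]
    exact mul_le_mul (hν1 x0 h0) (hcoordb x0 i j h0) (abs_nonneg _) hK10
  -- entrywise formula for SigT x - 1
  have hA : ∀ i j, (SigT x - 1) i j = ∫ x0, (ν x x0 - 1) * (x0 i * x0 j) ∂P := by
    intro i j
    have e : (SigT x - 1) i j = SigT x i j - (if i = j then (1:ℝ) else 0) := by
      simp [Matrix.sub_apply, Matrix.one_apply]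
    rw [e, hSigT, ← hcov i j, ← integral_sub (int1 i j) (int2 i j)]
    congr 1; funext x0; ring
  -- the quadratic form of SigT x - 1 as an integral
  have hmain : ∀ u v : EuclideanSpace ℝ (Fin s),
      (u : Fin s → ℝ) ⬝ᵥ (SigT x - 1).mulVec (v : Fin s → ℝ) =
        ∫ x0, (ν x x0 - 1) *
          (((u : Fin s → ℝ) ⬝ᵥ (x0 : Fin s → ℝ)) * ((v : Fin s → ℝ) ⬝ᵥ (x0 : Fin s → ℝ))) ∂P := by
    intro u v
    have e1 : (u : Fin s → ℝ) ⬝ᵥ (SigT x - 1).mulVec (v : Fin s → ℝ)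
        = ∑ p : Fin s × Fin s, u p.1 * v p.2 * ((SigT x - 1) p.1 p.2) := by
      rw [Fintype.sum_prod_type]
      simp only [dotProduct, Matrix.mulVec, Finset.mul_sum]
      refine Finset.sum_congr rfl fun i _ => Finset.sum_congr rfl fun j _ => by ring
    rw [e1]
    have e2 : ∀ p : Fin s × Fin s, u p.1 * v p.2 * ((SigT x - 1) p.1 p.2)
        = ∫ x0, (u p.1 * v p.2) * ((ν x x0 - 1) * (x0 p.1 * x0 p.2)) ∂P := by
      intro p
      rw [hA, integral_const_mul]
    rw [Finset.sum_congr rfl fun p _ => e2 p]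
    rw [← integral_finset_sum _ (fun p _ => ((int3 p.1 p.2).const_mul _))]
    congr 1
    funext x0
    rw [Fintype.sum_prod_type]
    simp only [dotProduct, Finset.mul_sum, Finset.sum_mul]
    rw [Finset.sum_comm]
    refine Finset.sum_congr rfl fun i _ => Finset.sum_congr rfl fun j _ => by ring
  -- operator norm bound for SigT x - 1
  have hST : matOpNorm (SigT x - 1) ≤ Cb := by
    apply matOpNorm_le_of_inner _ Cb hCb0
    intro u v
    rw [hmain u v]
    have hae : ∀ᵐ x0 ∂P, ‖(ν x x0 - 1) *
        (((u : Fin s → ℝ) ⬝ᵥ (x0 : Fin s → ℝ)) * ((v : Fin s → ℝ) ⬝ᵥ (x0 : Fin s → ℝ)))‖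
        ≤ Cb * ‖u‖ * ‖v‖ := by
      filter_upwards [hsupp] with x0 h0
      rw [Real.norm_eq_abs, abs_mul, abs_mul]
      have b1 := hν1 x0 h0
      have b2 : |(u : Fin s → ℝ) ⬝ᵥ (x0 : Fin s → ℝ)| ≤ ‖u‖ * B :=
        le_trans (dot_le_norms u x0) (mul_le_mul_of_nonneg_left h0 (norm_nonneg u))
      have b3 : |(v : Fin s → ℝ) ⬝ᵥ (x0 : Fin s → ℝ)| ≤ ‖v‖ * B :=
        le_trans (dot_le_norms v x0) (mul_le_mul_of_nonneg_left h0 (norm_nonneg v))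
      calc |ν x x0 - 1| * (|(u : Fin s → ℝ) ⬝ᵥ (x0 : Fin s → ℝ)| *
            |(v : Fin s → ℝ) ⬝ᵥ (x0 : Fin s → ℝ)|)
          ≤ K1 * ((‖u‖ * B) * (‖v‖ * B)) := by
            apply mul_le_mul b1 _ (by positivity) hK10
            exact mul_le_mul b2 b3 (abs_nonneg _) (by positivity)
        _ = Cb * ‖u‖ * ‖v‖ := by rw [hCb, hK1]; ring
    calc |∫ x0, (ν x x0 - 1) *
          (((u : Fin s → ℝ) ⬝ᵥ (x0 : Fin s → ℝ)) * ((v : Fin s → ℝ) ⬝ᵥ (x0 : Fin s → ℝ))) ∂P|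
        = ‖∫ x0, (ν x x0 - 1) *
          (((u : Fin s → ℝ) ⬝ᵥ (x0 : Fin s → ℝ)) * ((v : Fin s → ℝ) ⬝ᵥ (x0 : Fin s → ℝ))) ∂P‖ :=
          (Real.norm_eq_abs _).symm
      _ ≤ (Cb * ‖u‖ * ‖v‖) * (P Set.univ).toReal := norm_integral_le_of_norm_le_const hae
      _ = Cb * ‖u‖ * ‖v‖ := by simp
  -- conclusion
  have final : matOpNorm (M * (SigT x - 1) * M) ≤ Cb := by
    unfold matOpNorm
    rw [_root_.map_mul, _root_.map_mul]
    calc ‖T M * T (SigT x - 1) * T M‖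
        ≤ ‖T M * T (SigT x - 1)‖ * ‖T M‖ := norm_mul_le _ _
      _ ≤ (‖T M‖ * ‖T (SigT x - 1)‖) * ‖T M‖ :=
          mul_le_mul_of_nonneg_right (norm_mul_le _ _) (norm_nonneg _)
      _ ≤ (1 * Cb) * 1 := by
          have h2 : ‖T (SigT x - 1)‖ ≤ Cb := hST
          exact mul_le_mul (mul_le_mul hMnorm h2 (norm_nonneg _) zero_le_one)
            hMnorm (norm_nonneg _) (by positivity)
      _ = Cb := by ring
  rw [key1]
  exact final
end
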